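/- (Upper cross terms reduce to conditional KL) Suppose each conditional probability θ ↦ π_θ(v | y₁,…,y_{t−1}) is Fréchet differentiable at θ₀ and write π = π_{θ₀}. For all time indices t < t' in {1,…,T}: Σ_{y∈V^T} π(y) · D_θ[log π_θ(y_t | y_{1:t−1})](θ₀) · log(π(y_{t'} | y_{1:t'−1}) / π_ref(y_{t'} | y_{1:t'−1})) = Σ_{y∈V^T} π(y) · D_θ[log π_θ(y_t | y_{1:t−1})](θ₀) · KL(π(· | y_{1:t'−1}), π_ref(· | y_{1:t'−1})), where KL(p,q) = Σ_{v∈V} p(v)·log(p(v)/q(v)) and π(y) = Π_{s=1}^T π(y_s | y_{1:s−1}). -/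

import Mathlib

open Finset

noncomputable section

/-- Sequence probability of an autoregressive policy given by its conditionals:
`π(y) = ∏_{s=1}^T π(y_s | y_{1:s-1})`. -/
def seqP {V : Type*} [Fintype V] {T : ℕ} (cond : List V → V → ℝ) (y : Fin T → V) : ℝ :=
  ∏ s : Fin T, cond ((List.ofFn y).take s.1) (y s)

/-- Token-level KL divergence between two distributions over the next token. -/
def KLtok {V : Type*} [Fintype V] (p q : V → ℝ) : ℝ :=
  ∑ v, p v * Real.log (p v / q v)

set_option linter.unusedSectionVars false

namespace CrossAux

variable {V : Type*} [Fintype V] {T : ℕ}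

def seqPle (cond : List V → V → ℝ) (m : ℕ) (y : Fin T → V) : ℝ :=
  ∏ s ∈ Finset.univ.filter (fun s : Fin T => s.1 < m), cond ((List.ofFn y).take s.1) (y s)

lemma take_ofFn_update (y : Fin T → V) (j : Fin T) (v : V) {k : ℕ} (hk : k ≤ j.1) :
    (List.ofFn (Function.update y j v)).take k = (List.ofFn y).take k := by
  apply List.ext_getElem (by simp)
  intro i h1 h2
  have hi : i < T := by simp at h1; omega
  have hik : i < k := by simp at h1; omega
  simp only [List.getElem_take, List.getElem_ofFn]
  refine Function.update_of_ne ?_ _ _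
  intro h
  have : i = j.1 := congrArg Fin.val h
  omega

lemma seqPle_update (cond : List V → V → ℝ) (m : ℕ) (y : Fin T → V) (j : Fin T) (v : V)
    (hj : m ≤ j.1) : seqPle cond m (Function.update y j v) = seqPle cond m y := by
  refine Finset.prod_congr rfl fun s hs => ?_
  simp only [mem_filter] at hs
  have hs2 : s.1 < m := hs.2
  rw [take_ofFn_update _ _ _ (le_trans (le_of_lt hs2) hj)]
  rw [Function.update_of_ne (fun h => by subst h; omega)]

lemma seqPle_succ (cond : List V → V → ℝ) (m : ℕ) (hm : m < T) (y : Fin T → V) :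
    seqPle cond (m + 1) y = seqPle cond m y * cond ((List.ofFn y).take m) (y ⟨m, hm⟩) := by
  unfold seqPle
  have h : Finset.univ.filter (fun s : Fin T => s.1 < m + 1)
      = insert (⟨m, hm⟩ : Fin T) (Finset.univ.filter (fun s : Fin T => s.1 < m)) := by
    ext s; simp [Fin.ext_iff]; omega
  rw [h, Finset.prod_insert (by simp)]
  ring

lemma seqPle_eq_seqP (cond : List V → V → ℝ) (y : Fin T → V) :
    seqPle cond T y = seqP cond y := by
  unfold seqPle seqP
  rw [Finset.filter_true_of_mem (fun s _ => s.2)]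

lemma sum_update {E : Type*} [AddCommMonoid E] (f : (Fin T → V) → E) (i : Fin T) :
    ∑ y : Fin T → V, ∑ v : V, f (Function.update y i v)
      = (Fintype.card V) • ∑ y : Fin T → V, f y := by
  have hinv : Function.Involutive
      (fun p : (Fin T → V) × V => (Function.update p.1 i p.2, p.1 i)) := by
    intro p
    refine Prod.ext ?_ ?_
    · simp [Function.update_idem]
    · simp
  have h := Fintype.sum_bijective _ hinv.bijective
    (fun p : (Fin T → V) × V => f (Function.update p.1 i p.2))
    (fun p : (Fin T → V) × V => f p.1) (fun p => rfl)
  calc ∑ y : Fin T → V, ∑ v : V, f (Function.update y i v)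
      = ∑ p : (Fin T → V) × V, f (Function.update p.1 i p.2) := by
        rw [Fintype.sum_prod_type]
    _ = ∑ p : (Fin T → V) × V, f p.1 := h
    _ = ∑ y : Fin T → V, ∑ _v : V, f y := by rw [Fintype.sum_prod_type]
    _ = (Fintype.card V) • ∑ y : Fin T → V, f y := by
        simp [Finset.sum_const, Finset.smul_sum]

lemma step {E : Type*} [AddCommGroup E] [Module ℝ E] (cond : List V → V → ℝ)
    (m : ℕ) (hm : m < T) (Φ : (Fin T → V) → E) :
    (Fintype.card V) • ∑ y : Fin T → V, seqPle cond (m + 1) y • Φ y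
      = ∑ y : Fin T → V, seqPle cond m y •
          ∑ v : V, cond ((List.ofFn y).take m) v • Φ (Function.update y ⟨m, hm⟩ v) := by
  rw [← sum_update (fun y => seqPle cond (m + 1) y • Φ y) ⟨m, hm⟩]
  refine Finset.sum_congr rfl fun y _ => ?_
  rw [Finset.smul_sum]
  refine Finset.sum_congr rfl fun v _ => ?_
  rw [seqPle_succ cond m hm, seqPle_update cond m _ _ _ (le_refl m),
    take_ofFn_update _ _ _ (le_refl m), Function.update_self, smul_smul]

lemma zero_of_condzero {E : Type*} [AddCommGroup E] [Module ℝ E] [Nonempty V]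
    (cond : List V → V → ℝ) (hsum : ∀ p, ∑ v, cond p v = 1)
    (t' : Fin T) (Φ : (Fin T → V) → E)
    (hdep : ∀ (y : Fin T → V) (j : Fin T), t'.1 < j.1 → ∀ v, Φ (Function.update y j v) = Φ y)
    (hcond : ∀ y : Fin T → V,
      ∑ v, cond ((List.ofFn y).take t'.1) v • Φ (Function.update y t' v) = 0) :
    ∑ y : Fin T → V, seqP cond y • Φ y = 0 := by
  have hcard : (Fintype.card V : ℝ) ≠ 0 := by
    exact_mod_cast Fintype.card_pos.ne'
  have key : ∀ m, t'.1 + 1 ≤ m → m ≤ T → ∑ y : Fin T → V, seqPle cond m y • Φ y = 0 := by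
    intro m hm
    induction m, hm using Nat.le_induction with
    | base =>
      intro _
      have hlt : t'.1 < T := t'.2
      have h := step cond t'.1 hlt Φ
      have ht' : (⟨t'.1, hlt⟩ : Fin T) = t' := rfl
      rw [ht'] at h
      have h2 : ∑ y : Fin T → V, seqPle cond t'.1 y •
          ∑ v, cond ((List.ofFn y).take t'.1) v • Φ (Function.update y t' v) = 0 := by
        refine Finset.sum_eq_zero fun y _ => ?_
        rw [hcond y, smul_zero]
      rw [h2] at h
      rw [← Nat.cast_smul_eq_nsmul ℝ] at h
      exact (smul_eq_zero.mp h).resolve_left hcard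
    | succ m hm ih =>
      intro hm1
      have hmT : m < T := hm1
      have h := step cond m hmT Φ
      have h2 : ∑ y : Fin T → V, seqPle cond m y •
          ∑ v, cond ((List.ofFn y).take m) v • Φ (Function.update y ⟨m, hmT⟩ v)
          = ∑ y : Fin T → V, seqPle cond m y • Φ y := by
        refine Finset.sum_congr rfl fun y _ => ?_
        congr 1
        calc ∑ v, cond ((List.ofFn y).take m) v • Φ (Function.update y ⟨m, hmT⟩ v)
            = ∑ v, cond ((List.ofFn y).take m) v • Φ y := by
              refine Finset.sum_congr rfl fun v _ => by rw [hdep y ⟨m, hmT⟩ hm v]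
          _ = (∑ v, cond ((List.ofFn y).take m) v) • Φ y := by rw [Finset.sum_smul]
          _ = Φ y := by rw [hsum, one_smul]
      rw [h2, ih (le_of_lt hm1)] at h
      rw [← Nat.cast_smul_eq_nsmul ℝ] at h
      exact (smul_eq_zero.mp h).resolve_left hcard
  calc ∑ y : Fin T → V, seqP cond y • Φ y
      = ∑ y : Fin T → V, seqPle cond T y • Φ y := by
        refine Finset.sum_congr rfl fun y _ => by rw [seqPle_eq_seqP]
    _ = 0 := key T (by omega) le_rfl

end CrossAux

/-- upper cross terms reduce to the conditional (token-level) KL, for `t < t'`. -/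
theorem upper_cross_terms_reduce_to_conditional_KL
    {V : Type*} [Fintype V] [Nonempty V] {T : ℕ} (hT : 1 ≤ T)
    {Θ : Type*} [NormedAddCommGroup Θ] [NormedSpace ℝ Θ]
    (πref : List V → V → ℝ) (href_pos : ∀ p v, 0 < πref p v)
    (href_sum : ∀ p, ∑ v, πref p v = 1)
    (πθ : Θ → List V → V → ℝ)
    (hpos : ∀ θ p v, 0 < πθ θ p v) (hsum : ∀ θ p, ∑ v, πθ θ p v = 1)
    (θ₀ : Θ) (hdiff : ∀ p v, DifferentiableAt ℝ (fun θ => πθ θ p v) θ₀)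
    (t t' : Fin T) (htt : t < t') :
    (∑ y : Fin T → V,
      (seqP (πθ θ₀) y *
        Real.log (πθ θ₀ ((List.ofFn y).take t'.1) (y t')
          / πref ((List.ofFn y).take t'.1) (y t'))) •
        fderiv ℝ (fun θ => Real.log (πθ θ ((List.ofFn y).take t.1) (y t))) θ₀)
    = (∑ y : Fin T → V,
      (seqP (πθ θ₀) y *
        KLtok (πθ θ₀ ((List.ofFn y).take t'.1)) (πref ((List.ofFn y).take t'.1))) •
        fderiv ℝ (fun θ => Real.log (πθ θ ((List.ofFn y).take t.1) (y t))) θ₀) := by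
  have htt' : t.1 < t'.1 := htt
  set Φ : (Fin T → V) → (Θ →L[ℝ] ℝ) := fun y =>
    (Real.log (πθ θ₀ ((List.ofFn y).take t'.1) (y t') / πref ((List.ofFn y).take t'.1) (y t'))
      - KLtok (πθ θ₀ ((List.ofFn y).take t'.1)) (πref ((List.ofFn y).take t'.1))) •
      fderiv ℝ (fun θ => Real.log (πθ θ ((List.ofFn y).take t.1) (y t))) θ₀ with hΦ
  rw [← sub_eq_zero, ← Finset.sum_sub_distrib]
  have hterm : ∀ y ∈ (Finset.univ : Finset (Fin T → V)),
      ((seqP (πθ θ₀) y *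
        Real.log (πθ θ₀ ((List.ofFn y).take t'.1) (y t')
          / πref ((List.ofFn y).take t'.1) (y t'))) •
        fderiv ℝ (fun θ => Real.log (πθ θ ((List.ofFn y).take t.1) (y t))) θ₀
      - (seqP (πθ θ₀) y *
        KLtok (πθ θ₀ ((List.ofFn y).take t'.1)) (πref ((List.ofFn y).take t'.1))) •
        fderiv ℝ (fun θ => Real.log (πθ θ ((List.ofFn y).take t.1) (y t))) θ₀)
      = seqP (πθ θ₀) y • Φ y := by
    intro y _
    rw [hΦ]
    rw [smul_smul, mul_sub]
    exact (sub_smul _ _ _).symm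
  rw [Finset.sum_congr rfl hterm]
  apply CrossAux.zero_of_condzero (πθ θ₀) (hsum θ₀) t' Φ
  · -- hdep
    intro y j hj v
    have h1 := CrossAux.take_ofFn_update y j v (k := t'.1) (le_of_lt hj)
    have h2 := CrossAux.take_ofFn_update y j v (k := t.1) (le_of_lt (lt_trans htt' hj))
    have h3 : Function.update y j v t' = y t' :=
      Function.update_of_ne (fun h => by subst h; exact absurd hj (lt_irrefl _)) _ _
    have h4 : Function.update y j v t = y t :=
      Function.update_of_ne (fun h => by subst h; exact absurd (lt_trans htt' hj) (lt_irrefl _)) _ _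
    rw [hΦ]
    simp only [h1, h2, h3, h4]
  · -- hcond
    intro y
    have h1 : ∀ v : V, (List.ofFn (Function.update y t' v)).take t'.1
        = (List.ofFn y).take t'.1 := fun v => CrossAux.take_ofFn_update y t' v le_rfl
    have h2 : ∀ v : V, (List.ofFn (Function.update y t' v)).take t.1
        = (List.ofFn y).take t.1 := fun v =>
      CrossAux.take_ofFn_update y t' v (le_of_lt htt')
    rw [hΦ]
    simp only [h1, h2, Function.update_self]
    have h4' : ∀ v : V, Function.update y t' v t = y t := fun v =>
      Function.update_of_ne (ne_of_lt htt) _ _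
    simp only [h4']
    simp only [smul_smul, ← Finset.sum_smul]
    have hz : (∑ v, πθ θ₀ ((List.ofFn y).take t'.1) v *
        (Real.log (πθ θ₀ ((List.ofFn y).take t'.1) v / πref ((List.ofFn y).take t'.1) v)
          - KLtok (πθ θ₀ ((List.ofFn y).take t'.1)) (πref ((List.ofFn y).take t'.1)))) = 0 := by
      simp only [mul_sub]
      rw [Finset.sum_sub_distrib, ← Finset.sum_mul, hsum θ₀, one_mul]
      exact sub_self _
    rw [hz, zero_smul]
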